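/- Let A be a maximal subalgebra of a finite-dimensional K-algebra B with J(B) ⊄ A. Then A + J(B) = B and J(A) = A ∩ J(B), and the quotient map induces an isomorphism of algebras A/J(A) ≅ B/J(B). -/

import Mathlib

section Aux

variable {R : Type*} [Ring R]

private lemma jac_mul_right {x : R} (hx : x ∈ Ideal.jacobson (⊥ : Ideal R)) (y : R) :
    x * y ∈ Ideal.jacobson (⊥ : Ideal R) := by
  exact Ideal.mul_mem_right y _ hx

private lemma jac_left_inv {c : R} (hc : c ∈ Ideal.jacobson (⊥ : Ideal R)) :
    ∃ z : R, z * (1 - c) = 1 := by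
  obtain ⟨z, hz⟩ := Ideal.mem_jacobson_iff.1 hc (-1)
  rw [Ideal.mem_bot] at hz
  refine ⟨z, ?_⟩
  have h1 : z * -1 * c + z = 1 := sub_eq_zero.1 hz
  calc z * (1 - c) = z * -1 * c + z := by noncomm_ring
    _ = 1 := h1

private lemma jac_isUnit_one_sub {c : R} (hc : c ∈ Ideal.jacobson (⊥ : Ideal R)) :
    IsUnit (1 - c) := by
  obtain ⟨z, hz⟩ := jac_left_inv hc
  have hzc : -(z * c) ∈ Ideal.jacobson (⊥ : Ideal R) :=
    neg_mem (Ideal.mul_mem_left _ z hc)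
  have h2 : 1 - -(z * c) = z := by
    have h3 : z - z * c = 1 := by rw [← hz]; noncomm_ring
    rw [sub_neg_eq_add]
    exact (sub_eq_iff_eq_add.1 h3).symm
  obtain ⟨w, hw⟩ := jac_left_inv hzc
  rw [h2] at hw
  have hw' : w = 1 - c := by
    calc w = w * (z * (1 - c)) := by rw [hz, mul_one]
      _ = w * z * (1 - c) := by rw [mul_assoc]
      _ = 1 - c := by rw [hw, one_mul]
  exact isUnit_iff_exists.2 ⟨z, by rw [← hw']; exact hw, hz⟩

/-- Noncommutative Nakayama-type nilpotency of the Jacobson radical for an Artinian,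
Noetherian ring (element-level, with a uniform exponent). -/
private lemma jac_pow_eq_zero (R : Type*) [Ring R] [IsArtinianRing R] [IsNoetherianRing R] :
    ∃ k : ℕ, ∀ x ∈ Ideal.jacobson (⊥ : Ideal R), x ^ k = 0 := by
  set J := Ideal.jacobson (⊥ : Ideal R) with hJdef
  have nak : ∀ s : Finset R, Ideal.span (s : Set R) ≤ J • Ideal.span (s : Set R) →
      Ideal.span (s : Set R) = ⊥ := by
    classical
    intro s
    induction s using Finset.induction_on with
    | empty => intro _; simp
    | @insert a s _ ih =>
      intro hle
      have hsplit : Ideal.span ((insert a s : Finset R) : Set R)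
          = Ideal.span {a} ⊔ Ideal.span (s : Set R) := by
        rw [Finset.coe_insert, Ideal.span_insert]
      have hmem : a ∈ J • Ideal.span {a} ⊔ J • Ideal.span (s : Set R) := by
        rw [← Submodule.smul_sup J _ _, ← hsplit]
        exact hle (Ideal.subset_span (by simp))
      have h1 : J • Ideal.span {a} ≤ Submodule.map (LinearMap.toSpanSingleton R R a) J := by
        refine Submodule.smul_le.2 fun r hr n hn => ?_
        obtain ⟨b, hb⟩ := Submodule.mem_span_singleton.1 hn
        refine ⟨r * b, jac_mul_right hr b, ?_⟩
        simp only [LinearMap.toSpanSingleton_apply, smul_eq_mul] at *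
        rw [← hb, ← mul_assoc]
      have h2 : J • Ideal.span (s : Set R) ≤ Ideal.span (s : Set R) :=
        Submodule.smul_le.2 fun r _ n hn => Submodule.smul_mem _ r hn
      obtain ⟨y, hy, z, hz, hyz⟩ := Submodule.mem_sup.1 hmem
      obtain ⟨c, hcJ, hca⟩ := h1 hy
      simp only [LinearMap.toSpanSingleton_apply, smul_eq_mul] at hca
      have hzmem : z ∈ Ideal.span (s : Set R) := h2 hz
      have hz' : (1 - c) * a = z := by
        have hz0 : z = a - y := eq_sub_of_add_eq' hyz
        rw [← hca] at hz0
        rw [hz0]; noncomm_ring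
      obtain ⟨v, hv⟩ := (jac_isUnit_one_sub hcJ).exists_left_inv
      have hamem : a ∈ Ideal.span (s : Set R) := by
        have : v * ((1 - c) * a) ∈ Ideal.span (s : Set R) := by
          rw [hz']; exact Ideal.mul_mem_left _ v hzmem
        rwa [← mul_assoc, hv, one_mul] at this
      have hcollapse : Ideal.span ((insert a s : Finset R) : Set R) = Ideal.span (s : Set R) := by
        rw [hsplit, sup_eq_right.2]
        rw [Ideal.span_le, Set.singleton_subset_iff]
        exact hamem
      have := ih (by rw [← hcollapse]; exact le_trans hle (by rw [hcollapse]))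
      rw [hcollapse]; exact this
  -- the descending chain J • J • ⋯ • ⊤ stabilizes
  let P : ℕ → Ideal R := fun n => Nat.rec ⊤ (fun _ N => J • N) n
  have hPsucc : ∀ n, P (n + 1) = J • P n := fun n => rfl
  have hdec : ∀ n, P (n + 1) ≤ P n := fun n =>
    Submodule.smul_le.2 fun r _ m hm => Submodule.smul_mem _ r hm
  have hanti : Antitone P := antitone_nat_of_succ_le hdec
  obtain ⟨n, hn⟩ := IsArtinian.monotone_stabilizes
    (⟨fun m => OrderDual.toDual (P m), fun a b h => hanti h⟩ : ℕ →o (Ideal R)ᵒᵈ)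
  have hPn : P n = P (n + 1) := hn (n + 1) (Nat.le_succ n)
  obtain ⟨s, hs⟩ := IsNoetherian.noetherian (P n)
  have hs' : Ideal.span (s : Set R) = P n := hs
  have hPbot : P n = ⊥ := by
    rw [← hs']
    refine nak s ?_
    rw [hs', ← hPsucc, ← hPn]
  refine ⟨n, fun x hx => ?_⟩
  have key : ∀ m : ℕ, x ^ m ∈ P m := by
    intro m
    induction m with
    | zero => simp [P]
    | succ m ihm =>
      rw [pow_succ', hPsucc]
      exact Submodule.smul_mem_smul hx ihm
  have := key n
  rw [hPbot, Ideal.mem_bot] at this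
  exact this

private lemma mem_max_of_nil {m : Ideal R} (hm : m.IsMaximal) {x : R}
    (hx : ∀ b : R, IsNilpotent (b * x)) : x ∈ m := by
  by_contra hxm
  have hsup : m ⊔ Ideal.span {x} = ⊤ := by
    refine (Ideal.isMaximal_def.1 hm).2 _ (lt_of_le_of_ne le_sup_left fun h => hxm ?_)
    rw [h]
    exact Ideal.mem_sup_right (Ideal.subset_span (Set.mem_singleton x))
  have h1 : (1 : R) ∈ m ⊔ Ideal.span {x} := by rw [hsup]; trivial
  obtain ⟨y, hy, z, hz, hyz⟩ := Submodule.mem_sup.1 h1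
  obtain ⟨b, hb⟩ := Submodule.mem_span_singleton.1 hz
  have hy' : y = 1 - b * x := by
    rw [← hyz, ← hb, smul_eq_mul]; noncomm_ring
  have hu : IsUnit y := by rw [hy']; exact (hx b).isUnit_one_sub
  exact hm.ne_top (m.eq_top_of_isUnit_mem hy hu)

private lemma mem_jac_of_nil {x : R} (hx : ∀ b : R, IsNilpotent (b * x)) :
    x ∈ Ideal.jacobson (⊥ : Ideal R) := by
  rw [Ideal.jacobson]
  exact Ideal.mem_sInf.2 fun {I} hI => mem_max_of_nil hI.2 hx

private lemma pow_sub_mem (I : Ideal R) (hI : ∀ {x : R}, x ∈ I → ∀ y : R, x * y ∈ I)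
    {c j : R} (hj : j ∈ I) : ∀ n : ℕ, (c + j) ^ n - c ^ n ∈ I := by
  intro n
  induction n with
  | zero => simp
  | succ n ihn =>
    have hid : (c + j) ^ (n + 1) - c ^ (n + 1)
        = ((c + j) ^ n - c ^ n) * (c + j) + c ^ n * j := by
      rw [pow_succ, pow_succ]; noncomm_ring
    rw [hid]
    exact I.add_mem (hI ihn _) (I.mul_mem_left _ hj)

end Aux

/-- If `A` is a maximal subalgebra of a finite-dimensional algebra `B` with `J(B) ⊄ A`,
then `A + J(B) = B`, `J(A) = A ∩ J(B)`, and the quotient map induces an isomorphism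
`A/J(A) ≅ B/J(B)` (expressed by: the composite `A → B → B/J(B)` is surjective with
kernel `J(A)`). -/
theorem stmt2 {K B : Type*} [Field K] [Ring B] [Algebra K B] [FiniteDimensional K B]
    (A : Subalgebra K B) (hmax : IsCoatom A)
    (hJ : ¬ ∀ x ∈ Ideal.jacobson (⊥ : Ideal B), x ∈ A) :
    (Subalgebra.toSubmodule A ⊔
        Submodule.restrictScalars K (Ideal.jacobson (⊥ : Ideal B)) = ⊤)
    ∧ (∀ a : A, a ∈ Ideal.jacobson (⊥ : Ideal A) ↔ (a : B) ∈ Ideal.jacobson (⊥ : Ideal B))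
    ∧ (∀ b : B, ∃ a : A, b - (a : B) ∈ Ideal.jacobson (⊥ : Ideal B)) := by
  haveI : IsArtinianRing B := IsArtinianRing.of_finite K B
  haveI : IsNoetherianRing B := isNoetherian_of_tower K inferInstance
  haveI : IsArtinianRing A := IsArtinianRing.of_finite K A
  haveI : IsNoetherianRing A := isNoetherian_of_tower K inferInstance
  set J := Ideal.jacobson (⊥ : Ideal B) with hJdef
  obtain ⟨kB, hkB⟩ := jac_pow_eq_zero B
  obtain ⟨kA, hkA⟩ := jac_pow_eq_zero A
  push_neg at hJ
  obtain ⟨x₀, hx₀J, hx₀A⟩ := hJ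
  -- Part 1 : A + J = B as submodules
  set N : Submodule K B := Subalgebra.toSubmodule A ⊔ Submodule.restrictScalars K J with hNdef
  have hmemN : ∀ {y : B}, y ∈ N ↔ ∃ a ∈ A, ∃ j ∈ J, a + j = y := by
    intro y
    rw [hNdef, Submodule.mem_sup]
    constructor
    · rintro ⟨a, ha, j, hj, h⟩; exact ⟨a, ha, j, hj, h⟩
    · rintro ⟨a, ha, j, hj, h⟩; exact ⟨a, ha, j, hj, h⟩
  have hone : (1 : B) ∈ N := le_sup_left (α := Submodule K B) (A.one_mem : (1:B) ∈ Subalgebra.toSubmodule A)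
  have hmul : ∀ y z : B, y ∈ N → z ∈ N → y * z ∈ N := by
    intro y z hy hz
    obtain ⟨a, ha, j, hj, rfl⟩ := hmemN.1 hy
    obtain ⟨a', ha', j', hj', rfl⟩ := hmemN.1 hz
    refine hmemN.2 ⟨a * a', A.mul_mem ha ha', a * j' + j * a' + j * j', ?_, by noncomm_ring⟩
    exact J.add_mem (J.add_mem (J.mul_mem_left a hj') (jac_mul_right hj a')) (J.mul_mem_left j hj')
  set S : Subalgebra K B := N.toSubalgebra hone hmul with hSdef
  have hAS : A ≤ S := fun y hy => hmemN.2 ⟨y, hy, 0, J.zero_mem, add_zero y⟩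
  have hlt : A < S := lt_of_le_of_ne hAS (fun h => hx₀A (by
    rw [h]
    exact hmemN.2 ⟨0, A.zero_mem, x₀, hx₀J, zero_add x₀⟩))
  have hStop : S = ⊤ := hmax.2 S hlt
  have part1 : N = ⊤ := by
    have := congrArg Subalgebra.toSubmodule hStop
    rwa [hSdef, Submodule.toSubalgebra_toSubmodule, Algebra.top_toSubmodule] at this
  -- Part 3
  have part3 : ∀ b : B, ∃ a : A, b - (a : B) ∈ J := by
    intro b
    have hb : b ∈ N := by rw [part1]; trivial
    obtain ⟨a, ha, j, hj, h⟩ := hmemN.1 hb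
    exact ⟨⟨a, ha⟩, by rw [← h]; simpa using hj⟩
  refine ⟨part1, ?_, part3⟩
  -- Part 2
  intro a
  constructor
  · -- a ∈ J(A) → ↑a ∈ J(B)
    intro haJA
    refine mem_jac_of_nil fun b => ?_
    obtain ⟨a', hba'⟩ := part3 b
    set j := b - (a' : B) with hjdef
    have hb : b = (a' : B) + j := by rw [hjdef]; abel
    have hcmem : (a' * a : A) ∈ Ideal.jacobson (⊥ : Ideal A) := Ideal.mul_mem_left _ a' haJA
    have hsplit : b * (a : B) = ((a' * a : A) : B) + j * (a : B) := by
      rw [hb]; push_cast; noncomm_ring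
    have hjJ : j * (a : B) ∈ J := jac_mul_right hba' _
    have hpow : (b * (a : B)) ^ kA ∈ J := by
      have h1 := pow_sub_mem J (fun hx y => jac_mul_right hx y) (c := ((a' * a : A) : B)) hjJ kA
      have h2 : (((a' * a : A) : B)) ^ kA = 0 := by
        rw [← SubmonoidClass.coe_pow, hkA _ hcmem, ZeroMemClass.coe_zero]
      rw [← hsplit] at h1
      rwa [h2, sub_zero] at h1
    exact ⟨kA * kB, by rw [pow_mul]; exact hkB _ hpow⟩
  · -- ↑a ∈ J(B) → a ∈ J(A)
    intro haJ
    refine mem_jac_of_nil fun b => ?_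
    refine ⟨kB, ?_⟩
    have h1 : ((b * a : A) : B) ∈ J := by
      push_cast
      exact Ideal.mul_mem_left _ _ haJ
    have h2 : (((b * a : A) : B)) ^ kB = 0 := hkB _ h1
    rw [← SubmonoidClass.coe_pow] at h2
    exact Subtype.ext (by simpa using h2)
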